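/- There exists a universal constant c > 0 such that for every integer n ≥ 1, every ε > 0, and every ε-differentially private mechanism M on anonymized histograms, there exists an anonymized histogram h with n ≤ Σ_{a ∈ h} a ≤ n + 1 such that E_{H ∼ M(h)}[ℓ1(h, H)] ≥ c·√n·e^{−2ε}. -/

import Mathlib

open scoped ENNReal

/-- The `i`-th largest element (0-indexed) of a finite multiset of naturals,
taken to be `0` when `i` exceeds the number of elements. -/
def nthLargest (h : Multiset ℕ) (i : ℕ) : ℕ :=
  ((h.sort (· ≤ ·)).reverse).getD i 0

/-- The sorted ℓ1 distance `Σ_{i≥1} |n_(i)(h1) − n_(i)(h2)|` between two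
anonymized histograms.  All terms with `i ≥ h1.card + h2.card` vanish, so the
finite sum below equals the infinite sum. -/
def sortedL1 (h1 h2 : Multiset ℕ) : ℕ :=
  ∑ i ∈ Finset.range (h1.card + h2.card),
    ((nthLargest h1 i : ℤ) - (nthLargest h2 i : ℤ)).natAbs

/-- number of parts of `h` that are `≥ v` -/
def cnt (h : Multiset ℕ) (v : ℕ) : ℕ := Multiset.countP (fun a => v ≤ a) h

lemma cnt_le_card (h : Multiset ℕ) (v : ℕ) : cnt h v ≤ Multiset.card h :=
  Multiset.countP_le_card _ h

lemma cnt_antitone (h : Multiset ℕ) {v w : ℕ} (hvw : v ≤ w) : cnt h w ≤ cnt h v := by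
  induction h using Quotient.inductionOn with
  | _ l =>
    simp only [cnt, Multiset.coe_countP]
    exact List.countP_mono_left (fun x _ hx => by
      simp only [decide_eq_true_eq] at hx ⊢; omega)

-- list-level key lemma
lemma getD_ge_iff (L : List ℕ) (hL : List.Pairwise (fun a b => b ≤ a) L) (v i : ℕ)
    (hv : 1 ≤ v) : v ≤ L.getD i 0 ↔ i < L.countP (fun a => v ≤ a) := by
  constructor
  · intro hvi
    have hiL : i < L.length := by
      by_contra hc
      rw [List.getD_eq_default _ _ (le_of_not_gt hc)] at hvi
      omega
    rw [List.getD_eq_getElem _ _ hiL] at hvi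
    have h1 : L = L.take (i+1) ++ L.drop (i+1) := (List.take_append_drop _ _).symm
    have hlt : (L.take (i+1)).length = i + 1 := by
      rw [List.length_take]; omega
    have h2 : (L.take (i+1)).countP (fun a => v ≤ a) = i + 1 := by
      rw [List.countP_eq_length.2, hlt]
      intro a ha
      obtain ⟨j, hj, rfl⟩ := List.mem_iff_getElem.1 ha
      rw [hlt] at hj
      have hjlen : j < L.length := by omega
      rw [List.getElem_take]
      simp only [decide_eq_true_eq]
      rcases lt_or_eq_of_le (Nat.lt_succ_iff.1 hj) with hji | hji
      · exact le_trans hvi ((List.pairwise_iff_getElem.1 hL) j i hjlen hiL hji)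
      · subst hji; exact hvi
    have := congrArg (List.countP (fun a => v ≤ a)) h1
    rw [List.countP_append, h2] at this
    omega
  · intro hc
    have hiL : i < L.length := lt_of_lt_of_le hc List.countP_le_length
    rw [List.getD_eq_getElem _ _ hiL]
    by_contra hlt
    push_neg at hlt
    have h1 : L = L.take i ++ L.drop i := (List.take_append_drop _ _).symm
    have h2 : (L.drop i).countP (fun a => v ≤ a) = 0 := by
      rw [List.countP_eq_zero]
      intro a ha
      obtain ⟨j, hj, rfl⟩ := List.mem_iff_getElem.1 ha
      rw [List.getElem_drop]
      have hij : i + j < L.length := by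
        have : (L.drop i).length = L.length - i := List.length_drop; omega
      simp only [decide_eq_true_eq]
      intro hva
      have : L[i + j] ≤ L[i] := by
        rcases Nat.eq_or_lt_of_le (Nat.le_add_right i j) with hq | hq
        · simp [← hq]
        · exact (List.pairwise_iff_getElem.1 hL) i (i+j) hiL hij hq
      omega
    have := congrArg (List.countP (fun a => v ≤ a)) h1
    rw [List.countP_append, h2] at this
    have h3 : (L.take i).countP (fun a => v ≤ a) ≤ i := by
      calc (L.take i).countP _ ≤ (L.take i).length := List.countP_le_length
      _ ≤ i := by rw [List.length_take]; omega
    omega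

lemma le_nthLargest_iff {h : Multiset ℕ} {v i : ℕ} (hv : 1 ≤ v) :
    v ≤ nthLargest h i ↔ i < cnt h v := by
  have hpw : List.Pairwise (fun a b => b ≤ a) ((h.sort (· ≤ ·)).reverse) := by
    rw [List.pairwise_reverse]; exact Multiset.pairwise_sort h _
  rw [nthLargest, getD_ge_iff _ hpw _ _ hv]
  have : cnt h v = ((h.sort (· ≤ ·)).reverse).countP (fun a => v ≤ a) := by
    have hc : ((((h.sort (· ≤ ·)).reverse : List ℕ)) : Multiset ℕ) = h := by
      rw [Multiset.coe_reverse, Multiset.sort_eq]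
    conv_lhs => rw [cnt, ← hc]
    rw [Multiset.coe_countP]
  rw [this]

lemma nthLargest_eq_zero {h : Multiset ℕ} {i : ℕ} (hi : Multiset.card h ≤ i) :
    nthLargest h i = 0 := by
  apply List.getD_eq_default
  simpa [Multiset.length_sort] using hi

lemma nthLargest_le {h : Multiset ℕ} {V i : ℕ} (hV : ∀ a ∈ h, a ≤ V) :
    nthLargest h i ≤ V := by
  rcases Nat.eq_zero_or_pos (nthLargest h i) with h0 | h0
  · omega
  · have := (le_nthLargest_iff (v := nthLargest h i) h0).1 le_rfl
    -- nthLargest h i is attained by some member: easier: getD is member or default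
    rw [nthLargest] at *
    rcases lt_or_ge i ((h.sort (· ≤ ·)).reverse).length with hi | hi
    · rw [List.getD_eq_getElem _ _ hi] at *
      apply hV
      have hm : ((h.sort (· ≤ ·)).reverse)[i] ∈ (h.sort (· ≤ ·)).reverse := List.getElem_mem _
      rw [List.mem_reverse, Multiset.mem_sort] at hm
      exact hm
    · rw [List.getD_eq_default _ _ hi]; omega

lemma nthLargest_eq_card_filter {h : Multiset ℕ} {V i : ℕ} (hV : ∀ a ∈ h, a ≤ V) :
    nthLargest h i = ((Finset.Icc 1 V).filter (fun v => i < cnt h v)).card := by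
  have h1 : (Finset.Icc 1 V).filter (fun v => i < cnt h v)
      = (Finset.Icc 1 V).filter (fun v => v ≤ nthLargest h i) := by
    apply Finset.filter_congr
    intro v hv
    simp only [Finset.mem_Icc] at hv
    simp [(le_nthLargest_iff hv.1).symm]
  rw [h1]
  have h2 : (Finset.Icc 1 V).filter (fun v => v ≤ nthLargest h i)
      = Finset.Icc 1 (nthLargest h i) := by
    ext v
    simp only [Finset.mem_filter, Finset.mem_Icc]
    have := nthLargest_le (i := i) hV
    omega
  rw [h2, Nat.card_Icc]
  omega

-- sum over any large enough range
lemma sortedL1_eq_sum (h1 h2 : Multiset ℕ) (N : ℕ)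
    (hN : Multiset.card h1 + Multiset.card h2 ≤ N) :
    sortedL1 h1 h2 = ∑ i ∈ Finset.range N,
      ((nthLargest h1 i : ℤ) - (nthLargest h2 i : ℤ)).natAbs := by
  apply Finset.sum_subset (Finset.range_subset_range.2 hN)
  intro i hi hni
  simp only [Finset.mem_range, not_lt] at hni
  rw [nthLargest_eq_zero (by omega), nthLargest_eq_zero (by omega)]
  simp

lemma sortedL1_comm (h1 h2 : Multiset ℕ) : sortedL1 h1 h2 = sortedL1 h2 h1 := by
  rw [sortedL1, sortedL1, Nat.add_comm (Multiset.card h2)]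
  apply Finset.sum_congr rfl
  intro i _
  rw [← Int.natAbs_neg]
  ring_nf

lemma sortedL1_triangle (h1 h2 h3 : Multiset ℕ) :
    sortedL1 h1 h2 ≤ sortedL1 h1 h3 + sortedL1 h3 h2 := by
  set N := Multiset.card h1 + Multiset.card h2 + Multiset.card h3 with hNdef
  rw [sortedL1_eq_sum h1 h2 N (by omega), sortedL1_eq_sum h1 h3 N (by omega),
    sortedL1_eq_sum h3 h2 N (by omega), ← Finset.sum_add_distrib]
  apply Finset.sum_le_sum
  intro i _
  have : (nthLargest h1 i : ℤ) - nthLargest h2 i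
      = ((nthLargest h1 i : ℤ) - nthLargest h3 i) + ((nthLargest h3 i : ℤ) - nthLargest h2 i) := by
    ring
  rw [this]
  exact Int.natAbs_add_le _ _

-- indicator sum lemma
lemma indicator_sum_eq {N c1 c2 : ℕ} (hc1 : c1 ≤ N) (hc2 : c2 ≤ N) :
    ∑ i ∈ Finset.range N,
      (((if i < c1 then (1:ℤ) else 0)) - (if i < c2 then (1:ℤ) else 0)).natAbs
    = ((c1 : ℤ) - c2).natAbs := by
  have key : ∀ c1 c2 : ℕ, c1 ≤ N → c2 ≤ N → c2 ≤ c1 →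
      ∑ i ∈ Finset.range N,
        (((if i < c1 then (1:ℤ) else 0)) - (if i < c2 then (1:ℤ) else 0)).natAbs
      = ((c1 : ℤ) - c2).natAbs := by
    intro c1 c2 h1 h2 h21
    have : ∀ i, (((if i < c1 then (1:ℤ) else 0)) - (if i < c2 then (1:ℤ) else 0)).natAbs
        = if c2 ≤ i ∧ i < c1 then 1 else 0 := by
      intro i
      split_ifs <;> simp_all <;> omega
    simp_rw [this]
    rw [← Finset.card_filter]
    have : (Finset.range N).filter (fun i => c2 ≤ i ∧ i < c1) = Finset.Ico c2 c1 := by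
      ext i
      simp only [Finset.mem_filter, Finset.mem_range, Finset.mem_Ico]
      omega
    rw [this]
    simp [Nat.card_Ico]
    omega
  rcases le_total c2 c1 with hle | hle
  · exact key c1 c2 hc1 hc2 hle
  · rw [show ((c1:ℤ) - c2).natAbs = ((c2:ℤ) - c1).natAbs by omega]
    rw [← key c2 c1 hc2 hc1 hle]
    apply Finset.sum_congr rfl
    intro i _
    by_cases ha : i < c1 <;> by_cases hb : i < c2 <;> simp [ha, hb]

-- aligned abs sum
lemma natAbs_sum_eq_sum_natAbs {s : Finset ℕ} {f g : ℕ → ℤ}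
    (hal : (∀ v ∈ s, g v ≤ f v) ∨ (∀ v ∈ s, f v ≤ g v)) :
    ((∑ v ∈ s, f v) - (∑ v ∈ s, g v)).natAbs = ∑ v ∈ s, (f v - g v).natAbs := by
  have key : ∀ f g : ℕ → ℤ, (∀ v ∈ s, g v ≤ f v) →
      ((∑ v ∈ s, f v) - (∑ v ∈ s, g v)).natAbs = ∑ v ∈ s, (f v - g v).natAbs := by
    intro f g hfg
    have h1 : (0:ℤ) ≤ (∑ v ∈ s, f v) - (∑ v ∈ s, g v) := by
      rw [← Finset.sum_sub_distrib]
      exact Finset.sum_nonneg (fun v hv => by have := hfg v hv; omega)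
    zify
    rw [abs_of_nonneg h1, ← Finset.sum_sub_distrib]
    push_cast
    apply Finset.sum_congr rfl
    intro v hv
    rw [Int.abs_eq_natAbs, Int.natAbs_of_nonneg (by have := hfg v hv; omega)]
  rcases hal with hal | hal
  · exact key f g hal
  · rw [show ((∑ v ∈ s, f v) - (∑ v ∈ s, g v)).natAbs
      = ((∑ v ∈ s, g v) - (∑ v ∈ s, f v)).natAbs by omega]
    rw [key g f hal]
    apply Finset.sum_congr rfl
    intro v _
    omega

-- the conjugation identity
lemma sortedL1_eq_cnt {h1 h2 : Multiset ℕ} {V : ℕ}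
    (hV1 : ∀ a ∈ h1, a ≤ V) (hV2 : ∀ a ∈ h2, a ≤ V) :
    sortedL1 h1 h2 = ∑ v ∈ Finset.Icc 1 V, ((cnt h1 v : ℤ) - (cnt h2 v : ℤ)).natAbs := by
  set N := Multiset.card h1 + Multiset.card h2 with hN
  rw [sortedL1]
  have step1 : ∀ i, ((nthLargest h1 i : ℤ) - (nthLargest h2 i : ℤ)).natAbs
      = ∑ v ∈ Finset.Icc 1 V,
        (((if i < cnt h1 v then (1:ℤ) else 0)) - (if i < cnt h2 v then (1:ℤ) else 0)).natAbs := by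
    intro i
    have e1 : (nthLargest h1 i : ℤ) = ∑ v ∈ Finset.Icc 1 V, (if i < cnt h1 v then (1:ℤ) else 0) := by
      rw [nthLargest_eq_card_filter hV1, Finset.card_filter]
      push_cast
      rfl
    have e2 : (nthLargest h2 i : ℤ) = ∑ v ∈ Finset.Icc 1 V, (if i < cnt h2 v then (1:ℤ) else 0) := by
      rw [nthLargest_eq_card_filter hV2, Finset.card_filter]
      push_cast
      rfl
    rw [e1, e2]
    apply natAbs_sum_eq_sum_natAbs
    -- alignment
    by_cases hcase : ∀ v ∈ Finset.Icc 1 V, i < cnt h1 v → i < cnt h2 v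
    · right
      intro v hv
      by_cases hx : i < cnt h1 v
      · simp [hx, hcase v hv hx]
      · simp [hx]; split <;> omega
    · left
      push_neg at hcase
      obtain ⟨v0, hv0, hv0a, hv0b⟩ := hcase
      intro v hv
      by_cases hx : i < cnt h2 v
      · have hx1 : i < cnt h1 v := by
          rcases le_total v v0 with hvv | hvv
          · exact lt_of_lt_of_le hv0a (cnt_antitone h1 hvv)
          · exact absurd (lt_of_lt_of_le hx (cnt_antitone h2 hvv)) (by omega)
        simp [hx, hx1]
      · simp [hx]; split <;> omega
  simp_rw [step1]
  rw [Finset.sum_comm]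
  apply Finset.sum_congr rfl
  intro v _
  exact indicator_sum_eq (le_trans (cnt_le_card h1 v) (by omega))
    (le_trans (cnt_le_card h2 v) (by omega))

/-! ### The histogram family -/

lemma countP_replicate (p : ℕ → Prop) [DecidablePred p] (n a : ℕ) :
    Multiset.countP p (Multiset.replicate n a) = if p a then n else 0 := by
  induction n with
  | zero => simp
  | succ n ih =>
    rw [Multiset.replicate_succ, Multiset.countP_cons, ih]
    split <;> simp

lemma countP_finsum (s : Finset ℕ) (f : ℕ → Multiset ℕ) (p : ℕ → Prop) [DecidablePred p] :
    Multiset.countP p (∑ j ∈ s, f j) = ∑ j ∈ s, Multiset.countP p (f j) := by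
  classical
  induction s using Finset.induction with
  | empty => simp
  | insert _ _ hx ih => simp [Finset.sum_insert hx, Multiset.countP_add, ih]

/-- parts multiplicity -/
def mu (T : Finset ℕ) (j : ℕ) : ℕ :=
  3 + (if j ∈ T then 1 else 0) + (if j + 1 ∈ T then 0 else 1)

/-- the histogram associated to a subset `T ⊆ [1,m]`, with `p` padding parts of size 1 -/
def hist (p m : ℕ) (T : Finset ℕ) : Multiset ℕ :=
  Multiset.replicate p 1 + ∑ j ∈ Finset.Icc 1 m, Multiset.replicate (mu T j) j

lemma hist_pos {p m : ℕ} {T : Finset ℕ} : ∀ a ∈ hist p m T, 0 < a := by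
  intro a ha
  rw [hist, Multiset.mem_add] at ha
  rcases ha with ha | ha
  · rw [Multiset.eq_of_mem_replicate ha]; norm_num
  · rw [Multiset.mem_sum] at ha
    obtain ⟨j, hj, haj⟩ := ha
    rw [Multiset.eq_of_mem_replicate haj]
    simp only [Finset.mem_Icc] at hj
    omega

lemma hist_le {p m : ℕ} {T : Finset ℕ} (hm : 1 ≤ m) : ∀ a ∈ hist p m T, a ≤ m := by
  intro a ha
  rw [hist, Multiset.mem_add] at ha
  rcases ha with ha | ha
  · rw [Multiset.eq_of_mem_replicate ha]; omega
  · rw [Multiset.mem_sum] at ha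
    obtain ⟨j, hj, haj⟩ := ha
    rw [Multiset.eq_of_mem_replicate haj]
    simp only [Finset.mem_Icc] at hj
    omega

lemma sum_mu {m : ℕ} {T : Finset ℕ} (hT : T ⊆ Finset.Icc 1 m) {v : ℕ}
    (hv1 : 1 ≤ v) (hvm : v ≤ m) :
    ∑ j ∈ Finset.Icc v m, mu T j = 4*(m+1-v) + (if v ∈ T then 1 else 0) := by
  classical
  have hins : Finset.Icc v m = insert v (Finset.Icc (v+1) m) := by
    ext x; simp only [Finset.mem_insert, Finset.mem_Icc]; omega
  have hnotmem : v ∉ Finset.Icc (v+1) m := by simp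
  set A := ∑ j ∈ Finset.Icc (v+1) m, (if j ∈ T then 1 else 0) with hA
  have hAle : A ≤ m - v := by
    calc A ≤ ∑ j ∈ Finset.Icc (v+1) m, 1 :=
      Finset.sum_le_sum (fun j _ => by split <;> omega)
    _ = m - v := by simp [Nat.card_Icc]
  -- sum of chi over Icc v m
  have e1 : ∑ j ∈ Finset.Icc v m, (if j ∈ T then 1 else 0)
      = (if v ∈ T then 1 else 0) + A := by
    rw [hins, Finset.sum_insert hnotmem]
  -- sum of chi (j+1) over Icc v m equals A
  have e2 : ∑ j ∈ Finset.Icc v m, (if j + 1 ∈ T then 1 else 0) = A := by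
    have hmap : ∑ j ∈ Finset.Icc v m, (if j + 1 ∈ T then 1 else 0)
        = ∑ j ∈ Finset.Icc (v+1) (m+1), (if j ∈ T then 1 else 0) := by
      rw [← Finset.map_add_right_Icc v m 1]
      rw [Finset.sum_map]
      rfl
    rw [hmap]
    have hins2 : Finset.Icc (v+1) (m+1) = insert (m+1) (Finset.Icc (v+1) m) := by
      ext x; simp only [Finset.mem_insert, Finset.mem_Icc]; omega
    have hnm : (m+1) ∉ Finset.Icc (v+1) m := by simp
    rw [hins2, Finset.sum_insert hnm]
    have : m + 1 ∉ T := by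
      intro hc; have := hT hc; simp only [Finset.mem_Icc] at this; omega
    rw [if_neg this, zero_add]
  -- sum of the complement indicator
  have e3 : ∑ j ∈ Finset.Icc v m, (if j + 1 ∈ T then 0 else 1) = (m+1-v) - A := by
    have : ∀ j, (if j + 1 ∈ T then 0 else 1) + (if j + 1 ∈ T then 1 else 0) = 1 := by
      intro j; split <;> omega
    have hsum : (∑ j ∈ Finset.Icc v m, (if j + 1 ∈ T then 0 else 1))
        + (∑ j ∈ Finset.Icc v m, (if j + 1 ∈ T then 1 else 0))
        = ∑ j ∈ Finset.Icc v m, 1 := by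
      rw [← Finset.sum_add_distrib]
      exact Finset.sum_congr rfl (fun j _ => this j)
    rw [e2] at hsum
    simp only [Finset.sum_const, smul_eq_mul, mul_one, Nat.card_Icc] at hsum
    omega
  have emu : ∑ j ∈ Finset.Icc v m, mu T j
      = ∑ j ∈ Finset.Icc v m, 3 + (∑ j ∈ Finset.Icc v m, (if j ∈ T then 1 else 0))
        + ∑ j ∈ Finset.Icc v m, (if j + 1 ∈ T then 0 else 1) := by
    simp only [mu, Finset.sum_add_distrib]
  rw [emu, e1, e3]
  simp only [Finset.sum_const, smul_eq_mul, Nat.card_Icc]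
  omega

lemma cnt_hist {p m : ℕ} {T : Finset ℕ} (hT : T ⊆ Finset.Icc 1 m) {v : ℕ}
    (hv1 : 1 ≤ v) (hvm : v ≤ m) :
    cnt (hist p m T) v
      = (if v = 1 then p else 0) + 4*(m+1-v) + (if v ∈ T then 1 else 0) := by
  classical
  rw [cnt, hist, Multiset.countP_add, countP_finsum]
  have e1 : Multiset.countP (fun a => v ≤ a) (Multiset.replicate p 1)
      = if v = 1 then p else 0 := by
    rw [countP_replicate]
    by_cases hv : v = 1
    · simp [hv]
    · have : ¬ (v ≤ 1) := by omega
      simp [this, hv]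
  have e2 : ∀ j ∈ Finset.Icc 1 m, Multiset.countP (fun a => v ≤ a) (Multiset.replicate (mu T j) j)
      = if v ≤ j then mu T j else 0 := by
    intro j _
    rw [countP_replicate]
  rw [e1, Finset.sum_congr rfl e2]
  have e3 : ∑ j ∈ Finset.Icc 1 m, (if v ≤ j then mu T j else 0)
      = ∑ j ∈ Finset.Icc v m, mu T j := by
    rw [← Finset.sum_filter]
    congr 1
    ext x; simp only [Finset.mem_filter, Finset.mem_Icc]; omega
  rw [e3, sum_mu hT hv1 hvm]
  omega

/-- general: sum of a multiset equals sum of the tail-counts -/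
lemma sum_eq_sum_cnt {h : Multiset ℕ} {V : ℕ} (hV : ∀ a ∈ h, a ≤ V) :
    h.sum = ∑ v ∈ Finset.Icc 1 V, cnt h v := by
  classical
  induction h using Multiset.induction with
  | empty => simp [cnt]
  | cons a h ih =>
    have ha : a ≤ V := hV a (Multiset.mem_cons_self a h)
    have hsub : ∀ b ∈ h, b ≤ V := fun b hb => hV b (Multiset.mem_cons_of_mem hb)
    rw [Multiset.sum_cons, ih hsub]
    have : ∀ v, cnt (a ::ₘ h) v = cnt h v + (if v ≤ a then 1 else 0) := by
      intro v; rw [cnt, Multiset.countP_cons]; rfl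
    simp_rw [this]
    rw [Finset.sum_add_distrib]
    have : ∑ v ∈ Finset.Icc 1 V, (if v ≤ a then 1 else 0) = a := by
      rw [← Finset.sum_filter]
      have : (Finset.Icc 1 V).filter (fun v => v ≤ a) = Finset.Icc 1 a := by
        ext x; simp only [Finset.mem_filter, Finset.mem_Icc]; omega
      rw [this]
      simp [Nat.card_Icc]
    rw [this]
    omega

lemma hist_sum {p m : ℕ} {T : Finset ℕ} (hm : 1 ≤ m) (hT : T ⊆ Finset.Icc 1 m) :
    (hist p m T).sum = p + 2*(m*(m+1)) + T.card := by
  classical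
  rw [sum_eq_sum_cnt (hist_le hm)]
  have : ∀ v ∈ Finset.Icc 1 m, cnt (hist p m T) v
      = (if v = 1 then p else 0) + 4*(m+1-v) + (if v ∈ T then 1 else 0) := by
    intro v hv
    simp only [Finset.mem_Icc] at hv
    exact cnt_hist hT hv.1 hv.2
  rw [Finset.sum_congr rfl this, Finset.sum_add_distrib, Finset.sum_add_distrib]
  have e1 : ∑ v ∈ Finset.Icc 1 m, (if v = 1 then p else 0) = p := by
    rw [Finset.sum_ite_eq' (Finset.Icc 1 m) 1 (fun _ => p)]
    simp [hm]
  have e2 : ∑ v ∈ Finset.Icc 1 m, 4*(m+1-v) = 2*(m*(m+1)) := by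
    have h2 : (∑ v ∈ Finset.Icc 1 m, (m+1-v)) = ∑ v ∈ Finset.Icc 1 m, v := by
      apply Finset.sum_nbij' (fun v => m + 1 - v) (fun v => m + 1 - v) <;>
        intros <;> simp_all [Finset.mem_Icc] <;> omega
    have h3 : (∑ v ∈ Finset.Icc 1 m, v) * 2 = m * (m+1) := by
      have hsub : Finset.Icc 1 m ⊆ Finset.range (m+1) := by
        intro x hx; simp only [Finset.mem_Icc] at hx; simp only [Finset.mem_range]; omega
      have : (∑ v ∈ Finset.Icc 1 m, v) = ∑ x ∈ Finset.range (m+1), x := by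
        apply Finset.sum_subset hsub
        intro x hx hnx
        simp only [Finset.mem_Icc] at hnx
        simp only [Finset.mem_range] at hx
        omega
      rw [this, Finset.sum_range_id_mul_two]
      simp [Nat.mul_comm]
    rw [← Finset.mul_sum, h2]
    omega
  have e3 : ∑ v ∈ Finset.Icc 1 m, (if v ∈ T then 1 else 0) = T.card := by
    rw [← Finset.sum_filter]
    have : (Finset.Icc 1 m).filter (fun v => v ∈ T) = T := by
      ext x
      simp only [Finset.mem_filter]
      constructor
      · exact fun h => h.2
      · intro h; exact ⟨hT h, h⟩
    simp [this]
  rw [e1, e2, e3]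

lemma hist_dist {p m : ℕ} {T T' : Finset ℕ} (hm : 1 ≤ m)
    (hT : T ⊆ Finset.Icc 1 m) (hT' : T' ⊆ Finset.Icc 1 m) :
    sortedL1 (hist p m T) (hist p m T') = (symmDiff T T').card := by
  classical
  rw [sortedL1_eq_cnt (hist_le hm) (hist_le hm)]
  have e1 : ∀ v ∈ Finset.Icc 1 m,
      ((cnt (hist p m T) v : ℤ) - cnt (hist p m T') v).natAbs
      = if v ∈ symmDiff T T' then 1 else 0 := by
    intro v hv
    simp only [Finset.mem_Icc] at hv
    rw [cnt_hist hT hv.1 hv.2, cnt_hist hT' hv.1 hv.2]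
    by_cases h1 : v ∈ T <;> by_cases h2 : v ∈ T' <;>
      simp [h1, h2, Finset.mem_symmDiff] <;> push_cast <;> omega
  rw [Finset.sum_congr rfl e1, ← Finset.sum_filter]
  have : (Finset.Icc 1 m).filter (fun v => v ∈ symmDiff T T') = symmDiff T T' := by
    ext x
    simp only [Finset.mem_filter]
    constructor
    · exact fun h => h.2
    · intro h
      refine ⟨?_, h⟩
      rw [Finset.mem_symmDiff] at h
      rcases h with ⟨h, _⟩ | ⟨h, _⟩
      exacts [hT h, hT' h]
  simp [this]

/-! ### Probability machinery -/

section Packing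

variable (M : Multiset ℕ → PMF (Multiset ℕ)) (ε : ℝ)

/-- expected sorted-ℓ1 error of the mechanism on input `h` -/
noncomputable def Err (h : Multiset ℕ) : ℝ≥0∞ :=
  ∑' H : Multiset ℕ, M h H * (sortedL1 h H : ℝ≥0∞)

variable (hDP : ∀ h h' : Multiset ℕ, (∀ a ∈ h, 0 < a) → (∀ a ∈ h', 0 < a) →
    sortedL1 h h' = 1 →
    ∀ S : Set (Multiset ℕ),
      (M h).toOuterMeasure S ≤ ENNReal.ofReal (Real.exp ε) * (M h').toOuterMeasure S)

include hDP in
lemma pointDP {h h' : Multiset ℕ} (ph : ∀ a ∈ h, 0 < a) (ph' : ∀ a ∈ h', 0 < a)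
    (hn : sortedL1 h h' = 1) (H : Multiset ℕ) :
    M h H ≤ ENNReal.ofReal (Real.exp ε) * M h' H := by
  have := hDP h h' ph ph' hn {H}
  rwa [PMF.toOuterMeasure_apply_singleton, PMF.toOuterMeasure_apply_singleton] at this

include hDP in
lemma groupDP {p m : ℕ} (hm : 1 ≤ m) (T : Finset ℕ) :
    T ⊆ Finset.Icc 1 m → ∀ H,
      M (hist p m T) H ≤ ENNReal.ofReal (Real.exp ε) ^ T.card * M (hist p m ∅) H := by
  classical
  induction T using Finset.induction with
  | empty => intro _ H; simp
  | @insert j T₀ hj ih =>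
    intro hsub H
    have hsub₀ : T₀ ⊆ Finset.Icc 1 m := fun x hx => hsub (Finset.mem_insert_of_mem hx)
    have hdist : sortedL1 (hist p m (insert j T₀)) (hist p m T₀) = 1 := by
      rw [hist_dist hm hsub hsub₀]
      have : symmDiff (insert j T₀) T₀ = {j} := by
        ext x
        simp only [Finset.mem_symmDiff, Finset.mem_insert, Finset.mem_singleton]
        constructor
        · rintro (⟨(rfl | hx), hnx⟩ | ⟨hx, hnx⟩)
          · rfl
          · exact absurd hx hnx
          · exact absurd (Or.inr hx) hnx
        · rintro rfl
          exact Or.inl ⟨Or.inl rfl, hj⟩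
      rw [this, Finset.card_singleton]
    have step := pointDP M ε hDP (hist_pos) (hist_pos) hdist H
    calc M (hist p m (insert j T₀)) H
        ≤ ENNReal.ofReal (Real.exp ε) * M (hist p m T₀) H := step
      _ ≤ ENNReal.ofReal (Real.exp ε) *
          (ENNReal.ofReal (Real.exp ε) ^ T₀.card * M (hist p m ∅) H) := by
          exact mul_le_mul_right (ih hsub₀ H) _
      _ = ENNReal.ofReal (Real.exp ε) ^ (insert j T₀).card * M (hist p m ∅) H := by
          rw [Finset.card_insert_of_notMem hj, pow_succ]
          ring

lemma overlap_bound (p m r k : ℕ) (hm : 1 ≤ m) (H : Multiset ℕ) :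
    ((Finset.powersetCard k (Finset.Icc 1 m)).filter
      (fun T => sortedL1 (hist p m T) H ≤ r)).card
      ≤ ∑ i ∈ Finset.range (2*r+1), m.choose i := by
  classical
  set F := (Finset.powersetCard k (Finset.Icc 1 m)).filter
      (fun T => sortedL1 (hist p m T) H ≤ r) with hF
  rcases F.eq_empty_or_nonempty with he | ⟨T₀, hT₀⟩
  · rw [he]; simp
  · have hT₀' := hT₀
    rw [hF, Finset.mem_filter, Finset.mem_powersetCard] at hT₀'
    obtain ⟨⟨hT₀sub, _⟩, hT₀r⟩ := hT₀'
    set S := (Finset.range (2*r+1)).biUnion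
      (fun i => Finset.powersetCard i (Finset.Icc 1 m)) with hS
    have hcard : F.card ≤ S.card := by
      apply Finset.card_le_card_of_injOn (fun T => symmDiff T T₀)
      · intro T hT
        rw [hF, Finset.mem_coe, Finset.mem_filter, Finset.mem_powersetCard] at hT
        obtain ⟨⟨hTsub, _⟩, hTr⟩ := hT
        rw [hS, Finset.mem_coe, Finset.mem_biUnion]
        refine ⟨(symmDiff T T₀).card, ?_, ?_⟩
        · rw [Finset.mem_range]
          have h1 : sortedL1 (hist p m T) (hist p m T₀) ≤ 2*r := by
            calc sortedL1 (hist p m T) (hist p m T₀)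
                ≤ sortedL1 (hist p m T) H + sortedL1 H (hist p m T₀) :=
                  sortedL1_triangle _ _ _
              _ ≤ r + r := by
                  apply Nat.add_le_add hTr
                  rw [sortedL1_comm]; exact hT₀r
              _ = 2*r := by omega
          rw [← hist_dist (p := p) hm hTsub hT₀sub]
          omega
        · rw [Finset.mem_powersetCard]
          constructor
          · intro x hx
            rw [Finset.mem_symmDiff] at hx
            rcases hx with ⟨h1, _⟩ | ⟨h1, _⟩
            exacts [hTsub h1, hT₀sub h1]
          · rfl
      · intro a _ b _ hab
        have := congrArg (fun X => symmDiff X T₀) hab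
        simpa [symmDiff_symmDiff_cancel_right] using this
    calc F.card ≤ S.card := hcard
      _ ≤ ∑ i ∈ Finset.range (2*r+1), (Finset.powersetCard i (Finset.Icc 1 m)).card :=
          Finset.card_biUnion_le
      _ = ∑ i ∈ Finset.range (2*r+1), m.choose i := by
          apply Finset.sum_congr rfl
          intro i _
          rw [Finset.card_powersetCard, Nat.card_Icc]
          norm_num

include hDP in
lemma packing (p m k r : ℕ) (hm : 1 ≤ m) (hkm : k ≤ m)
    (hnum : 2 * (Real.exp (k*ε) * (∑ i ∈ Finset.range (2*r+1), (m.choose i : ℝ)))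
      < m.choose k) :
    ∃ T : Finset ℕ, T ⊆ Finset.Icc 1 m ∧ T.card = k ∧
      ((r:ℝ≥0∞)+1) / 2 ≤ Err M (hist p m T) := by
  classical
  by_contra hcon
  push_neg at hcon
  set 𝒯 := Finset.powersetCard k (Finset.Icc 1 m) with h𝒯
  have hcard𝒯 : 𝒯.card = m.choose k := by
    rw [h𝒯, Finset.card_powersetCard, Nat.card_Icc]
    norm_num
  set ind : Finset ℕ → Multiset ℕ → ℝ≥0∞ :=
    fun T H => if sortedL1 (hist p m T) H ≤ r then 1 else 0 with hind
  set P : Finset ℕ → ℝ≥0∞ := fun T => ∑' H, M (hist p m T) H * ind T H with hP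
  have hmemT : ∀ T ∈ 𝒯, T ⊆ Finset.Icc 1 m ∧ T.card = k := by
    intro T hT
    rwa [h𝒯, Finset.mem_powersetCard] at hT
  -- Markov step
  have claim1 : ∀ T ∈ 𝒯, (2:ℝ≥0∞)⁻¹ ≤ P T := by
    intro T hT
    obtain ⟨hTs, hTc⟩ := hmemT T hT
    have hE : Err M (hist p m T) < ((r:ℝ≥0∞)+1) / 2 := hcon T hTs hTc
    have key : ((r:ℝ≥0∞)+1) ≤ Err M (hist p m T) + ((r:ℝ≥0∞)+1) * P T := by
      have hrw : Err M (hist p m T) + ((r:ℝ≥0∞)+1) * P T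
          = ∑' H, (M (hist p m T) H * (sortedL1 (hist p m T) H : ℝ≥0∞)
              + ((r:ℝ≥0∞)+1) * (M (hist p m T) H * ind T H)) := by
        rw [ENNReal.tsum_add, ENNReal.tsum_mul_left]
        rfl
      rw [hrw]
      have hpt : ∀ H, ((r:ℝ≥0∞)+1) * M (hist p m T) H
          ≤ M (hist p m T) H * (sortedL1 (hist p m T) H : ℝ≥0∞)
            + ((r:ℝ≥0∞)+1) * (M (hist p m T) H * ind T H) := by
        intro H
        by_cases hd : sortedL1 (hist p m T) H ≤ r
        · rw [hind]
          simp only [hd, if_true, mul_one]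
          exact le_add_self
        · rw [hind]
          simp only [hd, if_false, mul_zero, add_zero]
          push_neg at hd
          rw [mul_comm]
          apply mul_le_mul_right
          have : (r+1 : ℕ) ≤ sortedL1 (hist p m T) H := hd
          exact_mod_cast Nat.cast_le.2 this
      calc ((r:ℝ≥0∞)+1) = ((r:ℝ≥0∞)+1) * ∑' H, M (hist p m T) H := by
            rw [(M (hist p m T)).tsum_coe, mul_one]
        _ = ∑' H, ((r:ℝ≥0∞)+1) * M (hist p m T) H := (ENNReal.tsum_mul_left).symm
        _ ≤ _ := ENNReal.tsum_le_tsum hpt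
    have hfin : ((r:ℝ≥0∞)+1) / 2 ≠ ⊤ :=
      ne_of_lt (ENNReal.div_lt_top (by simp) (by norm_num))
    have h2 : ((r:ℝ≥0∞)+1)/2 + ((r:ℝ≥0∞)+1)/2 ≤ ((r:ℝ≥0∞)+1)/2 + ((r:ℝ≥0∞)+1) * P T := by
      rw [ENNReal.add_halves]
      exact le_trans key (add_le_add_left hE.le _)
    have h3 : ((r:ℝ≥0∞)+1)/2 ≤ ((r:ℝ≥0∞)+1) * P T :=
      (ENNReal.add_le_add_iff_left hfin).1 h2
    have h4 : ((r:ℝ≥0∞)+1) * 2⁻¹ ≤ ((r:ℝ≥0∞)+1) * P T := by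
      rwa [div_eq_mul_inv] at h3
    rwa [ENNReal.mul_le_mul_iff_right (by simp) (by simp)] at h4
  -- group privacy + overlap
  set Ov : ℕ := ∑ i ∈ Finset.range (2*r+1), m.choose i with hOv
  have claim3 : ∑ T ∈ 𝒯, P T ≤ ENNReal.ofReal (Real.exp ε) ^ k * Ov := by
    have swap : ∑ T ∈ 𝒯, P T = ∑' H, ∑ T ∈ 𝒯, M (hist p m T) H * ind T H := by
      rw [hP]
      exact (Summable.tsum_finsetSum (fun T _ => ENNReal.summable)).symm
    rw [swap]
    have hpt : ∀ H, ∑ T ∈ 𝒯, M (hist p m T) H * ind T H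
        ≤ ENNReal.ofReal (Real.exp ε) ^ k * (M (hist p m ∅) H * Ov) := by
      intro H
      have step1 : ∑ T ∈ 𝒯, M (hist p m T) H * ind T H
          ≤ ∑ T ∈ 𝒯, ENNReal.ofReal (Real.exp ε) ^ k * (M (hist p m ∅) H * ind T H) := by
        apply Finset.sum_le_sum
        intro T hT
        obtain ⟨hTs, hTc⟩ := hmemT T hT
        have := groupDP M ε hDP (p := p) hm T hTs H
        rw [hTc] at this
        calc M (hist p m T) H * ind T H
            ≤ (ENNReal.ofReal (Real.exp ε) ^ k * M (hist p m ∅) H) * ind T H :=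
              mul_le_mul_left this _
          _ = ENNReal.ofReal (Real.exp ε) ^ k * (M (hist p m ∅) H * ind T H) := by ring
      refine le_trans step1 ?_
      rw [← Finset.mul_sum]
      apply mul_le_mul_right
      rw [← Finset.mul_sum]
      apply mul_le_mul_right
      have : ∑ T ∈ 𝒯, ind T H
          = ((𝒯.filter (fun T => sortedL1 (hist p m T) H ≤ r)).card : ℝ≥0∞) := by
        rw [hind, Finset.sum_boole]
      rw [this]
      have hov := overlap_bound p m r k hm H
      exact_mod_cast Nat.cast_le.2 hov
    calc ∑' H, ∑ T ∈ 𝒯, M (hist p m T) H * ind T H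
        ≤ ∑' H, ENNReal.ofReal (Real.exp ε) ^ k * (M (hist p m ∅) H * Ov) :=
          ENNReal.tsum_le_tsum hpt
      _ = ENNReal.ofReal (Real.exp ε) ^ k * ∑' H, M (hist p m ∅) H * Ov :=
          ENNReal.tsum_mul_left
      _ = ENNReal.ofReal (Real.exp ε) ^ k * ((∑' H, M (hist p m ∅) H) * Ov) := by
          rw [ENNReal.tsum_mul_right]
      _ = ENNReal.ofReal (Real.exp ε) ^ k * Ov := by
          rw [(M (hist p m ∅)).tsum_coe, one_mul]
  -- combine
  have hlow : (𝒯.card : ℝ≥0∞) * 2⁻¹ ≤ ∑ T ∈ 𝒯, P T := by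
    calc (𝒯.card : ℝ≥0∞) * 2⁻¹ = ∑ _T ∈ 𝒯, (2:ℝ≥0∞)⁻¹ := by
          rw [Finset.sum_const, nsmul_eq_mul]
      _ ≤ ∑ T ∈ 𝒯, P T := Finset.sum_le_sum claim1
  have hcomb : (m.choose k : ℝ≥0∞) * 2⁻¹ ≤ ENNReal.ofReal (Real.exp (k*ε) * Ov) := by
    rw [← hcard𝒯]
    refine le_trans hlow (le_trans claim3 ?_)
    rw [ENNReal.ofReal_mul (by positivity)]
    apply mul_le_mul'
    · rw [← ENNReal.ofReal_pow (Real.exp_nonneg ε), ← Real.exp_nat_mul]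
    · rw [ENNReal.ofReal_natCast]
  -- contradiction with hnum
  have : (m.choose k : ℝ) * 2⁻¹ ≤ Real.exp (k*ε) * Ov := by
    have h1 : ENNReal.ofReal ((m.choose k : ℝ) * 2⁻¹) ≤ ENNReal.ofReal (Real.exp (k*ε) * Ov) := by
      rw [ENNReal.ofReal_mul (by positivity)]
      convert hcomb using 2
      · rw [ENNReal.ofReal_natCast]
      · rw [ENNReal.ofReal_inv_of_pos (by norm_num)]
        norm_num
    rwa [ENNReal.ofReal_le_ofReal_iff (by positivity)] at h1
  have h2 : (m.choose k : ℝ) ≤ 2 * (Real.exp (↑k * ε) * Ov) := by linarith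
  have hcast : (Ov:ℝ) = ∑ i ∈ Finset.range (2*r+1), (m.choose i : ℝ) := by
    rw [hOv]; push_cast; ring
  rw [hcast] at h2
  linarith

end Packing

/-! ### Combinatorial bounds -/

lemma factorial_prod (k : ℕ) : k.factorial = ∏ j ∈ Finset.range k, (j+1) := by
  induction k with
  | zero => simp
  | succ k ih => rw [Finset.prod_range_succ, ← ih, Nat.factorial_succ]; ring

lemma choose_factorial_eq (m k : ℕ) : m.choose k * k.factorial = m.descFactorial k := by
  rw [Nat.choose_eq_descFactorial_div_factorial]
  exact Nat.div_mul_cancel (Nat.factorial_dvd_descFactorial m k)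

lemma pow_le_choose_mul (m k : ℕ) (hkm : k ≤ m) : m ^ k ≤ m.choose k * k ^ k := by
  have key : m ^ k * k.factorial ≤ m.descFactorial k * k ^ k := by
    have e1 : m ^ k * k.factorial = ∏ i ∈ Finset.range k, (m * (k - i)) := by
      rw [Finset.prod_mul_distrib, Finset.prod_const, Finset.card_range]
      congr 1
      have : ∀ i ∈ Finset.range k, k - i = ((fun j => j + 1) (k - 1 - i)) := by
        intro i hi; simp only [Finset.mem_range] at hi
        show k - i = k - 1 - i + 1
        omega
      rw [Finset.prod_congr rfl this, Finset.prod_range_reflect (fun j => j + 1) k]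
      exact factorial_prod k
    have e2 : m.descFactorial k * k ^ k = ∏ i ∈ Finset.range k, ((m - i) * k) := by
      rw [Finset.prod_mul_distrib, Finset.prod_const, Finset.card_range,
        Nat.descFactorial_eq_prod_range]
    rw [e1, e2]
    apply Finset.prod_le_prod'
    intro i hi
    simp only [Finset.mem_range] at hi
    have h1 : i ≤ k := hi.le
    have h2 : i ≤ m := le_trans h1 hkm
    zify [h1, h2]
    nlinarith [(by exact_mod_cast hkm : (k:ℤ) ≤ m), (Nat.cast_nonneg i : (0:ℤ) ≤ i)]
  rw [← choose_factorial_eq] at key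
  have hpos : 0 < k.factorial := Nat.factorial_pos k
  calc m ^ k = m ^ k * k.factorial / k.factorial := by rw [Nat.mul_div_cancel _ hpos]
    _ ≤ m.choose k * k.factorial * k ^ k / k.factorial := Nat.div_le_div_right key
    _ = m.choose k * k ^ k * k.factorial / k.factorial := by ring_nf
    _ = m.choose k * k ^ k := Nat.mul_div_cancel _ hpos

lemma sum_choose_le (m d : ℕ) :
    ∑ i ∈ Finset.range (d+1), m.choose i ≤ (m + d).choose d := by
  rw [Nat.add_choose_eq]
  rw [Finset.Nat.sum_antidiagonal_eq_sum_range_succ_mk]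
  apply Finset.sum_le_sum
  intro i hi
  simp only [Finset.mem_range] at hi
  have h1 : 1 ≤ d.choose (d - i) := Nat.choose_pos (by omega)
  calc m.choose i = m.choose i * 1 := by ring
    _ ≤ m.choose i * d.choose (d - i) := by exact Nat.mul_le_mul_left _ h1

lemma ov_mul_factorial_le (m d Ov : ℕ) (hOv : Ov = ∑ i ∈ Finset.range (d+1), m.choose i) :
    Ov * d.factorial ≤ (m + d) ^ d := by
  calc Ov * d.factorial ≤ (m+d).choose d * d.factorial := by
        apply Nat.mul_le_mul_right
        rw [hOv]; exact sum_choose_le m d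
    _ = (m+d).descFactorial d := choose_factorial_eq _ _
    _ ≤ (m+d)^d := Nat.descFactorial_le_pow _ _

lemma exp_one_le_three : Real.exp 1 ≤ 3 := by
  have := Real.exp_one_lt_d9
  linarith

lemma pow_self_le_three_pow_factorial (d : ℕ) :
    (d:ℝ) ^ d ≤ 3 ^ d * d.factorial := by
  induction d with
  | zero => simp
  | succ d ih =>
    rcases Nat.eq_zero_or_pos d with rfl | hd
    · norm_num
    · have hd' : (0:ℝ) < d := by exact_mod_cast hd
      have key : ((d:ℝ) + 1) ^ d ≤ 3 * (d:ℝ) ^ d := by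
        have e1 : ((d:ℝ) + 1) = (d:ℝ) * (1 + 1/d) := by field_simp
        have e2 : (1 + 1/(d:ℝ)) ^ d ≤ 3 := by
          have h1 : (1 + 1/(d:ℝ)) ≤ Real.exp (1/d) := by
            have := Real.add_one_le_exp (1/(d:ℝ))
            linarith
          have h2 : (1 + 1/(d:ℝ)) ^ d ≤ Real.exp (1/d) ^ d := by
            apply pow_le_pow_left₀ (by positivity) h1
          have h3 : Real.exp (1/(d:ℝ)) ^ d = Real.exp 1 := by
            rw [← Real.exp_nat_mul]
            congr 1
            field_simp
          rw [h3] at h2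
          exact le_trans h2 exp_one_le_three
        calc ((d:ℝ) + 1) ^ d = (d:ℝ)^d * (1 + 1/d)^d := by
              rw [e1, mul_pow]
          _ ≤ (d:ℝ)^d * 3 := by
              apply mul_le_mul_of_nonneg_left e2 (by positivity)
          _ = 3 * (d:ℝ)^d := by ring
      have : ((d:ℝ)+1)^(d+1) = ((d:ℝ)+1) * ((d:ℝ)+1)^d := by ring
      calc ((d+1:ℕ):ℝ)^(d+1) = ((d:ℝ)+1) * ((d:ℝ)+1)^d := by push_cast; ring
        _ ≤ ((d:ℝ)+1) * (3 * (d:ℝ)^d) := by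
            apply mul_le_mul_of_nonneg_left key (by positivity)
        _ ≤ ((d:ℝ)+1) * (3 * (3^d * d.factorial)) := by
            apply mul_le_mul_of_nonneg_left _ (by positivity)
            apply mul_le_mul_of_nonneg_left ih (by norm_num)
        _ = 3^(d+1) * ((d+1) * d.factorial) := by push_cast; ring
        _ = 3^(d+1) * (d+1).factorial := by rw [Nat.factorial_succ]; push_cast; ring

/-! ### Numeric estimates -/

lemma exp_eight_ge : (2975:ℝ) ≤ Real.exp 8 := by
  have h1 : Real.exp 8 = Real.exp 1 ^ 8 := by
    rw [← Real.exp_nat_mul]; norm_num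
  have h2 : (2.7182818283:ℝ) ≤ Real.exp 1 := Real.exp_one_gt_d9.le
  have h3 : (2.7182818283:ℝ)^8 ≤ Real.exp 1 ^ 8 := by
    apply pow_le_pow_left₀ (by norm_num) h2
  rw [h1]
  refine le_trans ?_ h3
  norm_num

lemma exp_nine_le : Real.exp 9 ≤ 8120 := by
  have h1 : Real.exp 9 = Real.exp 1 ^ 9 := by
    rw [← Real.exp_nat_mul]; norm_num
  have h2 : Real.exp 1 ≤ (2.7182818286:ℝ) := Real.exp_one_lt_d9.le
  have h3 : Real.exp 1 ^ 9 ≤ (2.7182818286:ℝ)^9 := by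
    apply pow_le_pow_left₀ (Real.exp_pos 1).le h2
  rw [h1]
  refine le_trans h3 ?_
  norm_num

lemma ninety_six_u_le {u : ℕ} (hu8 : 8 ≤ u) : 96 * (u:ℝ) ≤ Real.exp u := by
  have h1 : Real.exp (u:ℝ) = Real.exp 8 * Real.exp ((u:ℝ) - 8) := by
    rw [← Real.exp_add]; ring_nf
  have h2 : 1 + ((u:ℝ) - 8) ≤ Real.exp ((u:ℝ) - 8) := by
    have := Real.add_one_le_exp ((u:ℝ) - 8); linarith
  have h3 : (8:ℝ) ≤ u := by exact_mod_cast hu8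
  have h4 := exp_eight_ge
  have h5 : (0:ℝ) < Real.exp ((u:ℝ) - 8) := Real.exp_pos _
  rw [h1]
  nlinarith

/-- Step A : lower bound on the central binomial count -/
lemma stepA (ε : ℝ) (u q m k : ℕ) (huε : ε + 8 ≤ u)
    (hq1 : Real.exp u ≤ q) (hk1 : 1 ≤ k) (hkm : k ≤ m) (hqk : q * k ≤ m) :
    Real.exp ((ε+8)*k) ≤ (m.choose k : ℝ) := by
  have hqpos : (0:ℝ) < q := lt_of_lt_of_le (Real.exp_pos _) hq1
  have h1 : Real.exp ((ε+8)*k) = Real.exp (ε+8) ^ k := by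
    rw [← Real.exp_nat_mul]; ring_nf
  have h2 : Real.exp (ε+8) ≤ (q:ℝ) := by
    refine le_trans ?_ hq1
    apply Real.exp_le_exp.2
    exact huε
  have h3 : Real.exp (ε+8) ^ k ≤ (q:ℝ)^k :=
    pow_le_pow_left₀ (Real.exp_pos _).le h2 k
  -- q^k ≤ choose
  have h4 : ((q*k:ℕ):ℝ)^k ≤ ((m:ℕ):ℝ)^k := by
    apply pow_le_pow_left₀ (by positivity)
    exact_mod_cast hqk
  have h5 : (m:ℝ)^k ≤ (m.choose k : ℝ) * (k:ℝ)^k := by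
    exact_mod_cast pow_le_choose_mul m k hkm
  have hkpos : (0:ℝ) < (k:ℝ)^k := by
    apply pow_pos; exact_mod_cast hk1
  have h6 : (q:ℝ)^k * (k:ℝ)^k ≤ (m.choose k : ℝ) * (k:ℝ)^k := by
    calc (q:ℝ)^k * (k:ℝ)^k = ((q*k:ℕ):ℝ)^k := by push_cast; rw [mul_pow]
      _ ≤ (m:ℝ)^k := h4
      _ ≤ _ := h5
  have h7 : (q:ℝ)^k ≤ (m.choose k : ℝ) := le_of_mul_le_mul_right h6 hkpos
  rw [h1]; exact le_trans h3 h7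

/-- numeric hypothesis of `packing` in the `r = 0` case -/
lemma numeric_zero (ε : ℝ) (hε : 0 < ε) (u q m k : ℕ) (huε : ε + 8 ≤ u)
    (hq1 : Real.exp u ≤ q) (hk1 : 1 ≤ k) (hkm : k ≤ m) (hqk : q * k ≤ m) :
    2 * (Real.exp (k*ε) * (∑ i ∈ Finset.range (2*0+1), (m.choose i : ℝ)))
      < m.choose k := by
  have hA := stepA ε u q m k huε hq1 hk1 hkm hqk
  have e1 : ∑ i ∈ Finset.range (2*0+1), (m.choose i : ℝ) = 1 := by
    norm_num
  rw [e1, mul_one]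
  have e2 : Real.exp ((ε+8)*k) = Real.exp (k*ε) * Real.exp (8*k) := by
    rw [← Real.exp_add]; ring_nf
  have h2 : (2:ℝ) < Real.exp (8*(k:ℝ)) := by
    have h3 : (8:ℝ) ≤ 8*(k:ℝ) := by
      have : (1:ℝ) ≤ k := by exact_mod_cast hk1
      nlinarith
    have := Real.add_one_le_exp (8*(k:ℝ) - 1)
    have h4 : Real.exp (8*(k:ℝ)) = Real.exp (8*(k:ℝ) - 1) * Real.exp 1 := by
      rw [← Real.exp_add]; ring_nf
    nlinarith [Real.exp_pos (8*(k:ℝ)-1), Real.exp_one_gt_d9]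
  have hexp := Real.exp_pos ((k:ℝ)*ε)
  nlinarith [hA, e2]

set_option maxHeartbeats 1600000 in
/-- numeric hypothesis of `packing` in the main case -/
lemma numeric_main (ε : ℝ) (hε : 0 < ε) (u q m k r : ℕ)
    (huε : ε + 8 ≤ u) (hu8 : 8 ≤ u)
    (hq1 : Real.exp u ≤ q) (hq2 : (q:ℝ) ≤ 2 * Real.exp u)
    (hk1 : 1 ≤ k) (hkm : k ≤ m)
    (hqk : q * k ≤ m) (hm2 : m ≤ 2 * (k * q))
    (hr1 : 1 ≤ r) (hrk : 4*(u*r) ≤ k) (hkr : k ≤ 8*(u*r)) :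
    2 * (Real.exp (k*ε) * (∑ i ∈ Finset.range (2*r+1), (m.choose i : ℝ)))
      < m.choose k := by
  have hA := stepA ε u q m k huε hq1 hk1 hkm hqk
  set d := 2*r with hd
  set Ovn := ∑ i ∈ Finset.range (d+1), m.choose i with hOvn
  have hsum : ∑ i ∈ Finset.range (2*r+1), (m.choose i : ℝ) = (Ovn:ℝ) := by
    rw [hOvn]; push_cast; rfl
  -- Step B : Ovn ≤ exp(2u)^d ≤ exp k
  have hdm : d ≤ m := by
    have h32 : 32*r ≤ 4*(u*r) := by
      have := Nat.mul_le_mul_right r hu8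
      omega
    have : 32*r ≤ k := le_trans h32 hrk
    omega
  have hd2 : 2 ≤ d := by omega
  have hfact : (Ovn:ℝ) * (d.factorial:ℝ) ≤ ((m:ℝ) + d)^d := by
    have := ov_mul_factorial_le m d Ovn hOvn
    calc (Ovn:ℝ) * (d.factorial:ℝ) = ((Ovn * d.factorial : ℕ):ℝ) := by push_cast; ring
      _ ≤ (((m+d)^d : ℕ):ℝ) := by exact_mod_cast this
      _ = ((m:ℝ) + d)^d := by push_cast; ring
  have hkey : 3 * ((m:ℝ) + d) ≤ Real.exp (2*u) * d := by
    have h96 := ninety_six_u_le hu8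
    have hupos : (0:ℝ) < u := by
      have : (8:ℝ) ≤ u := by exact_mod_cast hu8
      linarith
    have hdpos : (0:ℝ) < d := by
      have h0 : 0 < d := by omega
      exact_mod_cast h0
    have e1 : 3*((m:ℝ)+d) ≤ 6*(m:ℝ) := by
      have : (d:ℝ) ≤ m := by exact_mod_cast hdm
      linarith
    have e2 : (6:ℝ)*(m:ℝ) ≤ 12*((k:ℝ)*(q:ℝ)) := by
      have : (m:ℝ) ≤ 2*((k:ℝ)*(q:ℝ)) := by exact_mod_cast hm2
      linarith
    have e3 : (k:ℝ) ≤ 8*((u:ℝ)*(r:ℝ)) := by exact_mod_cast hkr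
    have e4 : 12*((k:ℝ)*(q:ℝ)) ≤ 48*((u:ℝ)*(q:ℝ))*(d:ℝ) := by
      have hq0 : (0:ℝ) ≤ q := by positivity
      have hdr : (d:ℝ) = 2*(r:ℝ) := by rw [hd]; push_cast; ring
      rw [hdr]
      nlinarith [mul_le_mul_of_nonneg_right e3 hq0]
    have e5 : 48*((u:ℝ)*(q:ℝ)) ≤ Real.exp (2*(u:ℝ)) := by
      have h48 : (0:ℝ) ≤ 48*(u:ℝ) := by positivity
      calc 48*((u:ℝ)*(q:ℝ)) = (48*(u:ℝ))*(q:ℝ) := by ring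
        _ ≤ (48*(u:ℝ))*(2*Real.exp u) := mul_le_mul_of_nonneg_left hq2 h48
        _ = (96*(u:ℝ))*Real.exp u := by ring
        _ ≤ Real.exp u * Real.exp u :=
            mul_le_mul_of_nonneg_right h96 (Real.exp_pos (u:ℝ)).le
        _ = Real.exp (2*(u:ℝ)) := by rw [← Real.exp_add]; ring_nf
    have e6 : 48*((u:ℝ)*(q:ℝ))*(d:ℝ) ≤ Real.exp (2*(u:ℝ))*(d:ℝ) :=
      mul_le_mul_of_nonneg_right e5 (by positivity)
    linarith
  have hOvle : (Ovn:ℝ) ≤ Real.exp ((k:ℝ)) := by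
    have h3d : (0:ℝ) < (d:ℝ)^d := by
      have : (0:ℕ) < d := by omega
      positivity
    have hdd : (d:ℝ)^d ≤ 3^d * (d.factorial:ℝ) := pow_self_le_three_pow_factorial d
    -- Ovn * d^d ≤ (3(m+d))^d ≤ (exp(2u) d)^d
    have s1 : (Ovn:ℝ) * (d:ℝ)^d ≤ (3*((m:ℝ)+d))^d := by
      calc (Ovn:ℝ) * (d:ℝ)^d ≤ (Ovn:ℝ) * (3^d * (d.factorial:ℝ)) := by
            apply mul_le_mul_of_nonneg_left hdd (by positivity)
        _ = 3^d * ((Ovn:ℝ) * (d.factorial:ℝ)) := by ring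
        _ ≤ 3^d * ((m:ℝ)+d)^d := by
            apply mul_le_mul_of_nonneg_left hfact (by positivity)
        _ = (3*((m:ℝ)+d))^d := by rw [mul_pow]
    have s2 : (3*((m:ℝ)+d))^d ≤ (Real.exp (2*u) * d)^d := by
      apply pow_le_pow_left₀ (by positivity) hkey
    have s3 : (Real.exp (2*(u:ℝ)) * d)^d = Real.exp (2*u)^d * (d:ℝ)^d := by
      rw [mul_pow]
    have s4 : (Ovn:ℝ) ≤ Real.exp (2*(u:ℝ))^d := by
      have := le_trans s1 (le_trans s2 (le_of_eq s3))
      exact le_of_mul_le_mul_right this h3d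
    have s5 : Real.exp (2*(u:ℝ))^d = Real.exp (2*(u:ℝ)*d) := by
      rw [← Real.exp_nat_mul]; ring_nf
    have s6 : 2*(u:ℝ)*d ≤ (k:ℝ) := by
      have : (4*(u*r) : ℕ) ≤ k := hrk
      have h' : (4*((u:ℝ)*(r:ℝ))) ≤ (k:ℝ) := by exact_mod_cast this
      have hdr : (d:ℝ) = 2*(r:ℝ) := by rw [hd]; push_cast; ring
      nlinarith
    calc (Ovn:ℝ) ≤ Real.exp (2*(u:ℝ))^d := s4
      _ = Real.exp (2*(u:ℝ)*d) := s5
      _ ≤ Real.exp (k:ℝ) := Real.exp_le_exp.2 s6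
  -- conclude
  rw [hsum]
  have e2 : Real.exp ((ε+8)*k) = Real.exp ((k:ℝ)*ε) * (Real.exp ((k:ℝ)) * Real.exp (7*(k:ℝ))) := by
    rw [← Real.exp_add, ← Real.exp_add]; ring_nf
  have h7k : (2:ℝ) < Real.exp (7*(k:ℝ)) := by
    have h3 : (7:ℝ) ≤ 7*(k:ℝ) := by
      have : (1:ℝ) ≤ k := by exact_mod_cast hk1
      nlinarith
    have := Real.add_one_le_exp (7*(k:ℝ))
    linarith
  have hOv0 : (0:ℝ) ≤ (Ovn:ℝ) := by positivity
  have hekpos : (0:ℝ) < Real.exp ((k:ℝ)*ε) := Real.exp_pos _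
  have hekpos2 : (0:ℝ) < Real.exp ((k:ℝ)) := Real.exp_pos _
  have hYZ : 2*Real.exp ((k:ℝ)) < Real.exp ((k:ℝ)) * Real.exp (7*(k:ℝ)) := by
    nlinarith [mul_pos hekpos2 (sub_pos.2 h7k)]
  calc 2 * (Real.exp ((k:ℝ)*ε) * (Ovn:ℝ))
      ≤ 2 * (Real.exp ((k:ℝ)*ε) * Real.exp ((k:ℝ))) := by
        nlinarith [mul_le_mul_of_nonneg_left hOvle hekpos.le]
    _ = Real.exp ((k:ℝ)*ε) * (2*Real.exp ((k:ℝ))) := by ring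
    _ < Real.exp ((k:ℝ)*ε) * (Real.exp ((k:ℝ)) * Real.exp (7*(k:ℝ))) :=
        (mul_lt_mul_of_pos_left hYZ hekpos)
    _ = Real.exp ((ε+8)*k) := e2.symm
    _ ≤ (m.choose k : ℝ) := hA


/-! ### Final assembly -/

lemma nthLargest_singleton (a i : ℕ) :
    nthLargest ({a} : Multiset ℕ) i = if i = 0 then a else 0 := by
  rw [nthLargest, Multiset.sort_singleton]
  cases i <;> simp

lemma sortedL1_single (a b : ℕ) : sortedL1 {a} {b} = ((a:ℤ) - b).natAbs := by
  rw [sortedL1]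
  have hc : Multiset.card ({a} : Multiset ℕ) + Multiset.card ({b} : Multiset ℕ) = 2 := by
    simp
  rw [hc]
  rw [Finset.sum_range_succ, Finset.sum_range_one]
  simp [nthLargest_singleton]

lemma ofReal_le_half_bound {x : ℝ} {r : ℕ} (h : x ≤ ((r:ℝ)+1)/2) :
    ENNReal.ofReal x ≤ ((r:ℝ≥0∞)+1)/2 := by
  have e : ((r:ℝ≥0∞)+1)/2 = ENNReal.ofReal (((r:ℝ)+1)/2) := by
    rw [ENNReal.ofReal_div_of_pos (by norm_num)]
    congr 1
    · rw [ENNReal.ofReal_add (by positivity) (by norm_num), ENNReal.ofReal_natCast,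
        ENNReal.ofReal_one]
    · exact (ENNReal.ofReal_ofNat 2).symm
  rw [e]
  exact ENNReal.ofReal_le_ofReal h

set_option maxHeartbeats 3000000 in
theorem dp_histogram_lower_bound_low_privacy' :
    ∃ c : ℝ, 0 < c ∧
      ∀ n : ℕ, 1 ≤ n → ∀ ε : ℝ, 0 < ε →
        ∀ M : Multiset ℕ → PMF (Multiset ℕ),
          (∀ h h' : Multiset ℕ, (∀ a ∈ h, 0 < a) → (∀ a ∈ h', 0 < a) →
            sortedL1 h h' = 1 →
            ∀ S : Set (Multiset ℕ),
              (M h).toOuterMeasure S ≤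
                ENNReal.ofReal (Real.exp ε) * (M h').toOuterMeasure S) →
          ∃ h : Multiset ℕ, (∀ a ∈ h, 0 < a) ∧
            n ≤ h.sum ∧ h.sum ≤ n + 1 ∧
            ENNReal.ofReal (c * Real.sqrt n * Real.exp (-2 * ε)) ≤
              ∑' H : Multiset ℕ, M h H * (sortedL1 h H : ℝ≥0∞) := by
  refine ⟨((2:ℝ)^30)⁻¹, by norm_num, ?_⟩
  intro n hn ε hε M hDP
  set c : ℝ := ((2:ℝ)^30)⁻¹ with hc
  have hc_pos : (0:ℝ) < c := by rw [hc]; norm_num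
  have hn1 : (1:ℝ) ≤ (n:ℝ) := by exact_mod_cast hn
  have hsq_pos : (0:ℝ) < Real.sqrt n := Real.sqrt_pos.2 (by linarith)
  have hexp1 : (1:ℝ) ≤ Real.exp ε := Real.one_le_exp hε.le
  have hexp_pos : (0:ℝ) < Real.exp ε := Real.exp_pos ε
  set B : ℝ := c * Real.sqrt n * Real.exp (-2 * ε) with hB
  have hB_pos : 0 < B := by
    rw [hB]; positivity
  by_cases hcase1 : Real.sqrt n ≤ 2^29 * Real.exp ε
  · -- pair argument
    have hpos0 : ∀ a ∈ ({n} : Multiset ℕ), 0 < a := by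
      intro a ha; rw [Multiset.mem_singleton] at ha; omega
    have hpos1 : ∀ a ∈ ({n+1} : Multiset ℕ), 0 < a := by
      intro a ha; rw [Multiset.mem_singleton] at ha; omega
    have hd01 : sortedL1 {n} {n+1} = 1 := by
      rw [sortedL1_single]
      have : ((n:ℤ) - (n+1:ℕ)) = -1 := by push_cast; ring
      rw [this]
      rfl
    have key : (1:ℝ≥0∞) ≤ Err M {n} + ENNReal.ofReal (Real.exp ε) * Err M {n+1} := by
      have tri : ∀ H : Multiset ℕ,
          (1:ℝ≥0∞) ≤ (sortedL1 {n} H : ℝ≥0∞) + (sortedL1 {n+1} H : ℝ≥0∞) := by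
        intro H
        have h := sortedL1_triangle {n} {n+1} H
        rw [hd01, sortedL1_comm H] at h
        have : (1:ℕ) ≤ sortedL1 {n} H + sortedL1 {n+1} H := h
        exact_mod_cast this
      have hdp1 : sortedL1 ({n} : Multiset ℕ) {n+1} = 1 := hd01
      calc (1:ℝ≥0∞) = ∑' H, M {n} H := ((M {n}).tsum_coe).symm
        _ ≤ ∑' H, M {n} H * ((sortedL1 {n} H : ℝ≥0∞) + (sortedL1 {n+1} H : ℝ≥0∞)) := by
            apply ENNReal.tsum_le_tsum
            intro H
            conv_lhs => rw [← mul_one (M {n} H)]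
            exact mul_le_mul_right (tri H) _
        _ = Err M {n} + ∑' H, M {n} H * (sortedL1 {n+1} H : ℝ≥0∞) := by
            rw [Err, ← ENNReal.tsum_add]
            apply tsum_congr
            intro H
            rw [mul_add]
        _ ≤ Err M {n} + ∑' H, (ENNReal.ofReal (Real.exp ε) * M {n+1} H)
              * (sortedL1 {n+1} H : ℝ≥0∞) := by
            apply add_le_add_right
            apply ENNReal.tsum_le_tsum
            intro H
            exact mul_le_mul_left (pointDP M ε hDP hpos0 hpos1 hdp1 H) _
        _ = Err M {n} + ENNReal.ofReal (Real.exp ε) * Err M {n+1} := by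
            congr 1
            rw [Err, ← ENNReal.tsum_mul_left]
            apply tsum_congr
            intro H
            ring
    have hBe : B * (1 + Real.exp ε) ≤ 1 := by
      have hEE : Real.exp (-2*ε) * (Real.exp ε * Real.exp ε) = 1 := by
        rw [← Real.exp_add, ← Real.exp_add, show -2*ε + (ε+ε) = 0 by ring, Real.exp_zero]
      have key2 : B * (2*Real.exp ε) * Real.exp ε = 2*c*Real.sqrt n := by
        rw [hB]
        linear_combination (2*c*Real.sqrt n) * hEE
      have h2c : 2*c*Real.sqrt n ≤ Real.exp ε := by
        rw [hc]
        nlinarith [hcase1]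
      have h3 : B * (2*Real.exp ε) * Real.exp ε ≤ 1 * Real.exp ε := by
        rw [key2, one_mul]; exact h2c
      have h4 : B * (2*Real.exp ε) ≤ 1 := le_of_mul_le_mul_right h3 hexp_pos
      nlinarith
    by_cases hE0 : ENNReal.ofReal B ≤ Err M {n}
    · exact ⟨{n}, hpos0, by simp, by simp, hE0⟩
    · refine ⟨{n+1}, hpos1, by simp, by simp, ?_⟩
      by_contra hE1
      push_neg at hE0 hE1
      have hx_ne : ENNReal.ofReal (Real.exp ε) * Err M {n+1} ≠ ⊤ := by
        apply ne_of_lt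
        calc ENNReal.ofReal (Real.exp ε) * Err M {n+1}
            ≤ ENNReal.ofReal (Real.exp ε) * ENNReal.ofReal B := mul_le_mul_right hE1.le _
          _ < ⊤ := by
              rw [← ENNReal.ofReal_mul hexp_pos.le]
              exact ENNReal.ofReal_lt_top
      have h1 : (1:ℝ≥0∞) < ENNReal.ofReal B + ENNReal.ofReal (Real.exp ε) * Err M {n+1} :=
        lt_of_le_of_lt key (ENNReal.add_lt_add_right hx_ne hE0)
      have h2 : ENNReal.ofReal B + ENNReal.ofReal (Real.exp ε) * Err M {n+1}
          ≤ ENNReal.ofReal (B * (1 + Real.exp ε)) := by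
        calc ENNReal.ofReal B + ENNReal.ofReal (Real.exp ε) * Err M {n+1}
            ≤ ENNReal.ofReal B + ENNReal.ofReal (Real.exp ε) * ENNReal.ofReal B :=
              add_le_add_right (mul_le_mul_right hE1.le _) _
          _ = ENNReal.ofReal (B + Real.exp ε * B) := by
              rw [← ENNReal.ofReal_mul hexp_pos.le,
                ← ENNReal.ofReal_add hB_pos.le (by positivity)]
          _ = ENNReal.ofReal (B * (1 + Real.exp ε)) := by ring_nf
      have h3 : ENNReal.ofReal (B * (1 + Real.exp ε)) ≤ 1 := by
        calc ENNReal.ofReal (B * (1 + Real.exp ε)) ≤ ENNReal.ofReal 1 :=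
              ENNReal.ofReal_le_ofReal hBe
          _ = 1 := ENNReal.ofReal_one
      exact absurd (lt_of_lt_of_le h1 (le_trans h2 h3)) (lt_irrefl _)
  · -- packing cases
    push_neg at hcase1
    set s := Nat.sqrt n with hs
    have hs_le : (s:ℝ) ≤ Real.sqrt n := by
      rw [Real.le_sqrt (by positivity) (by positivity)]
      exact_mod_cast Nat.sqrt_le' n
    have hs_ge : Real.sqrt n ≤ (s:ℝ) + 1 := by
      have h2 : (n:ℝ) ≤ ((s:ℝ)+1)^2 := by
        have := (Nat.lt_succ_sqrt' n).le
        exact_mod_cast this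
      calc Real.sqrt n ≤ Real.sqrt (((s:ℝ)+1)^2) := Real.sqrt_le_sqrt h2
        _ = (s:ℝ)+1 := Real.sqrt_sq (by positivity)
    set u := ⌈ε⌉₊ + 8 with hu
    have hu8 : 8 ≤ u := by omega
    have huR : ((u:ℝ)) = (⌈ε⌉₊ : ℝ) + 8 := by rw [hu]; push_cast; ring
    have huε : ε + 8 ≤ (u:ℝ) := by
      have := Nat.le_ceil ε
      rw [huR]; linarith
    have huup : (u:ℝ) ≤ ε + 9 := by
      have := Nat.ceil_lt_add_one hε.le
      rw [huR]; linarith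
    have hu_pos : (0:ℝ) < u := by
      have : (8:ℝ) ≤ u := by exact_mod_cast hu8
      linarith
    set q := ⌈Real.exp (u:ℝ)⌉₊ with hq
    have hq1 : Real.exp u ≤ (q:ℝ) := Nat.le_ceil _
    have hexpu1 : (1:ℝ) ≤ Real.exp (u:ℝ) := Real.one_le_exp hu_pos.le
    have hq2 : (q:ℝ) ≤ 2*Real.exp u := by
      have h1 : (q:ℝ) < Real.exp (u:ℝ) + 1 := Nat.ceil_lt_add_one (Real.exp_pos _).le
      linarith
    have hqe9 : (q:ℝ) ≤ 16240 * Real.exp ε := by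
      have h1 : Real.exp (u:ℝ) ≤ Real.exp (ε+9) := Real.exp_le_exp.2 huup
      have h2 : Real.exp (ε+9) = Real.exp ε * Real.exp 9 := by
        rw [← Real.exp_add]
      nlinarith [exp_nine_le, Real.exp_pos ε]
    have hq0 : 1 ≤ q := by
      have : (1:ℝ) ≤ (q:ℝ) := le_trans hexpu1 hq1
      exact_mod_cast this
    set m := s / 3 with hm
    have h3m : 3*m ≤ s ∧ s ≤ 3*m + 2 := by omega
    have hm_ge : (Real.sqrt n - 3)/3 ≤ (m:ℝ) := by
      have h1 : (s:ℝ) ≤ 3*(m:ℝ) + 2 := by exact_mod_cast h3m.2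
      linarith
    have hqm : q ≤ m := by
      have hcast : (q:ℝ) ≤ (m:ℝ) := by
        have h1 : 16240*Real.exp ε ≤ (Real.sqrt n - 3)/3 := by
          nlinarith [hcase1]
        linarith [hqe9, hm_ge]
      exact_mod_cast hcast
    have hm1 : 1 ≤ m := le_trans hq0 hqm
    set k := m / q with hk
    have hk1 : 1 ≤ k := (Nat.one_le_div_iff (by omega)).2 hqm
    have hkm : k ≤ m := Nat.div_le_self _ _
    have hqk : q * k ≤ m := by
      rw [hk, mul_comm]; exact Nat.div_mul_le_self m q
    have hm2' : m < k*q + q := by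
      have h1 : m / q < k+1 := by omega
      have h2 := (Nat.div_lt_iff_lt_mul (show 0 < q by omega)).1 h1
      have h3 : (k+1)*q = k*q + q := by ring
      omega
    have hm2 : m ≤ 2*(k*q) := by
      have h2 : q ≤ k*q := Nat.le_mul_of_pos_left q (by omega)
      omega
    have hp_le : 2*(m*(m+1)) + k ≤ n := by
      have h9 : (3*m)*(3*m) ≤ s*s := Nat.mul_le_mul h3m.1 h3m.1
      have hss : s*s ≤ n := by
        have := Nat.sqrt_le' n
        calc s*s = s^2 := by ring
          _ ≤ n := this
      have hmm : m ≤ m*m := Nat.le_mul_of_pos_left m (by omega)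
      calc 2*(m*(m+1)) + k = 2*(m*m) + 2*m + k := by ring
        _ ≤ 9*(m*m) := by omega
        _ = (3*m)*(3*m) := by ring
        _ ≤ s*s := h9
        _ ≤ n := hss
    set p := n - (2*(m*(m+1)) + k) with hp
    have hsum_exact : ∀ T : Finset ℕ, T ⊆ Finset.Icc 1 m → T.card = k →
        (hist p m T).sum = n := by
      intro T hTsub hTcard
      rw [hist_sum hm1 hTsub, hTcard, hp]
      omega
    by_cases hsmall : B ≤ 1/2
    · -- r = 0
      obtain ⟨T, hTsub, hTcard, hTerr⟩ := packing M ε hDP p m k 0 hm1 hkm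
        (numeric_zero ε hε u q m k huε hq1 hk1 hkm hqk)
      refine ⟨hist p m T, hist_pos, ?_, ?_, ?_⟩
      · rw [hsum_exact T hTsub hTcard]
      · rw [hsum_exact T hTsub hTcard]; omega
      · refine le_trans (ofReal_le_half_bound (r := 0) ?_) hTerr
        push_cast
        linarith
    · -- main case
      push_neg at hsmall
      have hsq2 : 2^29 * (Real.exp ε * Real.exp ε) < Real.sqrt n := by
        have hEE : Real.exp (-2*ε) * (Real.exp ε * Real.exp ε) = 1 := by
          rw [← Real.exp_add, ← Real.exp_add, show -2*ε + (ε+ε) = 0 by ring, Real.exp_zero]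
        have h1 : 1/2 < c * Real.sqrt n * Real.exp (-2*ε) := hsmall
        rw [hc] at h1
        have ha : (2:ℝ)^29 < Real.sqrt n * Real.exp (-2*ε) := by nlinarith [h1]
        have hc2 : (Real.sqrt n * Real.exp (-2*ε))*(Real.exp ε*Real.exp ε)
            = Real.sqrt n := by
          rw [mul_assoc, hEE, mul_one]
        calc (2:ℝ)^29 * (Real.exp ε * Real.exp ε)
            < (Real.sqrt n * Real.exp (-2*ε))*(Real.exp ε*Real.exp ε) :=
              mul_lt_mul_of_pos_right ha (by positivity)
          _ = Real.sqrt n := hc2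
      have hk4u : 4*u ≤ k := by
        rw [hk]
        rw [Nat.le_div_iff_mul_le (show 0 < q by omega)]
        have hcast : 4*(u:ℝ)*(q:ℝ) ≤ (m:ℝ) := by
          have h1 : (u:ℝ)*(q:ℝ) ≤ (ε+9)*(16240*Real.exp ε) := by
            apply mul_le_mul huup hqe9 (by positivity) (by linarith)
          have h2 : (1+ε)*Real.exp ε ≤ Real.exp ε * Real.exp ε := by
            nlinarith [Real.add_one_le_exp ε, Real.exp_pos ε]
          have h3 : 194880*((ε+9)*Real.exp ε) + 3 ≤ 2^29*((1+ε)*Real.exp ε) := by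
            nlinarith [hexp1, mul_pos hε hexp_pos]
          have h4 : (2:ℝ)^29*((1+ε)*Real.exp ε) ≤ 2^29*(Real.exp ε*Real.exp ε) := by
            nlinarith [h2]
          linarith [h1, h3, h4, hsq2, hm_ge]
        exact_mod_cast hcast
      set r := k / (4*u) with hr
      have hr1 : 1 ≤ r := (Nat.one_le_div_iff (by omega)).2 hk4u
      have hrk : 4*(u*r) ≤ k := by
        have h0 := Nat.div_mul_le_self k (4*u)
        calc 4*(u*r) = (k/(4*u))*(4*u) := by rw [hr]; ring
          _ ≤ k := h0
      have hkr : k ≤ 8*(u*r) := by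
        have h1 : k / (4*u) < r+1 := by omega
        have h2 := (Nat.div_lt_iff_lt_mul (show 0 < 4*u by omega)).1 h1
        have h3 : (r+1)*(4*u) ≤ (2*r)*(4*u) := by
          apply Nat.mul_le_mul_right
          omega
        calc k ≤ (r+1)*(4*u) := h2.le
          _ ≤ (2*r)*(4*u) := h3
          _ = 8*(u*r) := by ring
      obtain ⟨T, hTsub, hTcard, hTerr⟩ := packing M ε hDP p m k r hm1 hkm
        (numeric_main ε hε u q m k r huε hu8 hq1 hq2 hk1 hkm hqk hm2 hr1 hrk hkr)
      refine ⟨hist p m T, hist_pos, ?_, ?_, ?_⟩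
      · rw [hsum_exact T hTsub hTcard]
      · rw [hsum_exact T hTsub hTcard]; omega
      · refine le_trans (ofReal_le_half_bound ?_) hTerr
        -- real inequality : B ≤ (r+1)/2
        have hq_pos : (0:ℝ) < q := by
          have h0 : (0:ℕ) < q := by omega
          exact_mod_cast h0
        have hk_real : (Real.sqrt n)/4 ≤ (k:ℝ)*q := by
          have h12 : 12 + 12*(q:ℝ) ≤ Real.sqrt n := by
            have hEle : Real.exp ε ≤ Real.exp ε * Real.exp ε := by
              nlinarith [hexp1, hexp_pos]
            nlinarith [hqe9, hsq2, hexp1, hEle]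
          have hmq : (m:ℝ) ≤ (k:ℝ)*q + q := by exact_mod_cast hm2'.le
          nlinarith [hm_ge]
        have hr_real : (k:ℝ) ≤ ((r:ℝ)+1)*(4*(u:ℝ)) := by
          have h1' : k / (4*u) < r+1 := by omega
          have h1 : k < (r+1)*(4*u) :=
            (Nat.div_lt_iff_lt_mul (show 0 < 4*u by omega)).1 h1'
          exact_mod_cast h1.le
        have h16 : 16*(u:ℝ)*(q:ℝ) ≤ 2^29 * (Real.exp ε * Real.exp ε) := by
          have h2 : (1+ε)*Real.exp ε ≤ Real.exp ε * Real.exp ε := by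
            nlinarith [Real.add_one_le_exp ε, Real.exp_pos ε]
          have h1 : (u:ℝ)*(q:ℝ) ≤ (ε+9)*(16240*Real.exp ε) := by
            apply mul_le_mul huup hqe9 (by positivity) (by linarith)
          have h3 : 259840*((ε+9)*Real.exp ε) ≤ 2^29*((1+ε)*Real.exp ε) := by
            nlinarith [hexp1, mul_pos hε hexp_pos]
          have h4 : (2:ℝ)^29*((1+ε)*Real.exp ε) ≤ 2^29*(Real.exp ε*Real.exp ε) := by
            nlinarith [h2]
          nlinarith [h1, h3, h4]
        have hcomb : Real.sqrt n ≤ 2^29 * (Real.exp ε * Real.exp ε) * ((r:ℝ)+1) := by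
          have hstep : Real.sqrt n ≤ 16*(u:ℝ)*(q:ℝ)*((r:ℝ)+1) := by
            have hh := mul_le_mul_of_nonneg_right hr_real hq_pos.le
            nlinarith [hk_real]
          have hh2 := mul_le_mul_of_nonneg_right h16
            (by positivity : (0:ℝ) ≤ (r:ℝ)+1)
          nlinarith [hh2]
        have hEE : Real.exp (-2*ε) * (Real.exp ε * Real.exp ε) = 1 := by
          rw [← Real.exp_add, ← Real.exp_add, show -2*ε + (ε+ε) = 0 by ring, Real.exp_zero]
        rw [hB, hc]
        have hmul := mul_le_mul_of_nonneg_right hcomb (Real.exp_pos (-2*ε)).le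
        have h5 : 2^29 * (Real.exp ε*Real.exp ε) * ((r:ℝ)+1) * Real.exp (-2*ε)
            = 2^29*((r:ℝ)+1) := by
          linear_combination ((2:ℝ)^29*((r:ℝ)+1)) * hEE
        rw [h5] at hmul
        linarith [hmul]

/-- Lower bound in the low privacy regime: there is a universal constant
`c > 0` such that for every `n ≥ 1`, every `ε > 0`, and every
`ε`-differentially private mechanism `M` on anonymized histograms (neighbors:
histograms of positive integers at sorted ℓ1 distance 1), some histogram `h`
with `n ≤ Σ_{a ∈ h} a ≤ n + 1` has expected error
`E_{H ∼ M(h)}[ℓ1(h, H)] ≥ c·√n·e^{−2ε}`. -/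
theorem dp_histogram_lower_bound_low_privacy :
    ∃ c : ℝ, 0 < c ∧
      ∀ n : ℕ, 1 ≤ n → ∀ ε : ℝ, 0 < ε →
        ∀ M : Multiset ℕ → PMF (Multiset ℕ),
          (∀ h h' : Multiset ℕ, (∀ a ∈ h, 0 < a) → (∀ a ∈ h', 0 < a) →
            sortedL1 h h' = 1 →
            ∀ S : Set (Multiset ℕ),
              (M h).toOuterMeasure S ≤
                ENNReal.ofReal (Real.exp ε) * (M h').toOuterMeasure S) →
          ∃ h : Multiset ℕ, (∀ a ∈ h, 0 < a) ∧
            n ≤ h.sum ∧ h.sum ≤ n + 1 ∧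
            ENNReal.ofReal (c * Real.sqrt n * Real.exp (-2 * ε)) ≤
              ∑' H : Multiset ℕ, M h H * (sortedL1 h H : ℝ≥0∞) := by
  exact dp_histogram_lower_bound_low_privacy'
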